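/- arXiv:1511.00764 — 4 statements merged into one kernel-verified Lean document; each statement's English description precedes it below -/
import Mathlib

section
/- For every real z > 1/3, the trigamma function satisfies ψ'(z) < 1/z + 1/z². -/
/-- The trigamma function, via its series expansion (valid for `z > 0`). -/
noncomputable def trigamma (z : ℝ) : ℝ := ∑' j : ℕ, 1 / (z + j) ^ 2

lemma telescope_hasSum (c : ℝ) (hc : 0 < c) :
    HasSum (fun j : ℕ => 1 / (c + j) - 1 / (c + 1 + j)) (1 / c) := by
  have hpos : ∀ j : ℕ, (0:ℝ) < c + j := fun j => by positivity
  have hnonneg : ∀ j : ℕ, (0:ℝ) ≤ 1 / (c + j) - 1 / (c + 1 + j) := by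
    intro j
    have h1 : (0:ℝ) < c + j := hpos j
    have h2 : c + (j:ℝ) ≤ c + 1 + j := by linarith
    have := one_div_le_one_div_of_le h1 h2
    linarith
  rw [hasSum_iff_tendsto_nat_of_nonneg hnonneg]
  have hsum : ∀ n : ℕ, ∑ i ∈ Finset.range n, (1 / (c + i) - 1 / (c + 1 + i))
      = 1 / c - 1 / (c + n) := by
    intro n
    have key : ∀ i : ℕ, 1 / (c + (i:ℝ)) - 1 / (c + 1 + i)
        = (fun i : ℕ => 1 / (c + (i:ℝ))) i - (fun i : ℕ => 1 / (c + (i:ℝ))) (i + 1) := by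
      intro i; push_cast; ring_nf
    rw [Finset.sum_congr rfl (fun i _ => key i), Finset.sum_range_sub']
    norm_num
  simp only [hsum]
  have htop : Filter.Tendsto (fun n : ℕ => c + (n:ℝ)) Filter.atTop Filter.atTop :=
    Filter.tendsto_atTop_add_const_left _ c tendsto_natCast_atTop_atTop
  have h0 : Filter.Tendsto (fun n : ℕ => 1 / (c + (n:ℝ))) Filter.atTop (nhds 0) := by
    simpa [one_div, Function.comp_def] using tendsto_inv_atTop_zero.comp htop
  have := Filter.Tendsto.const_sub (1 / c) h0
  simpa using this

lemma one_div_sub_eq (a b : ℝ) (ha : a ≠ 0) (hb : b ≠ 0) :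
    1 / a - 1 / b = (b - a) / (a * b) := by
  field_simp

lemma summable_half (w : ℝ) (hw : 1 / 2 < w) : Summable (fun j : ℕ => 1 / (w + j) ^ 2) := by
  have hc : 0 < w - 1 / 2 := by linarith
  have hts := telescope_hasSum (w - 1 / 2) hc
  refine Summable.of_nonneg_of_le (fun j => by positivity) (fun j => ?_) hts.summable
  have h1 : (0:ℝ) < w - 1/2 + j := by positivity
  have h2 : (0:ℝ) < w - 1/2 + 1 + j := by positivity
  rw [one_div_sub_eq _ _ h1.ne' h2.ne']
  have hnum : (w - 1/2 + 1 + (j:ℝ)) - (w - 1/2 + j) = 1 := by ring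
  rw [hnum]
  apply one_div_le_one_div_of_le (by positivity)
  nlinarith [sq_nonneg (w + (j:ℝ))]

lemma trigamma_upper (w : ℝ) (hw : 1 / 2 < w) : trigamma w < 1 / (w - 1 / 2) := by
  have hc : 0 < w - 1 / 2 := by linarith
  have hts := telescope_hasSum (w - 1 / 2) hc
  have hlt : ∀ j : ℕ, 1 / (w + j) ^ 2 < 1 / (w - 1/2 + j) - 1 / (w - 1/2 + 1 + j) := by
    intro j
    have h1 : (0:ℝ) < w - 1/2 + j := by positivity
    have h2 : (0:ℝ) < w - 1/2 + 1 + j := by positivity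
    rw [one_div_sub_eq _ _ h1.ne' h2.ne']
    have hnum : (w - 1/2 + 1 + (j:ℝ)) - (w - 1/2 + j) = 1 := by ring
    rw [hnum]
    apply one_div_lt_one_div_of_lt (by positivity)
    nlinarith [sq_nonneg (w + (j:ℝ))]
  have := (summable_half w hw).tsum_lt_tsum (fun j => le_of_lt (hlt j)) (hlt 0) hts.summable
  rw [hts.tsum_eq] at this
  exact this

theorem trigamma_lt (z : ℝ) (hz : 1 / 3 < z) : trigamma z < 1 / z + 1 / z ^ 2 := by
  have hz0 : 0 < z := lt_trans (by norm_num) hz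
  have hw : 1 / 2 < z + 1 := by linarith
  have hsum : Summable (fun j : ℕ => 1 / (z + j) ^ 2) := by
    have h := summable_half (z + 1) hw
    rw [← summable_nat_add_iff 1]
    have heq : (fun n : ℕ => 1 / (z + (↑(n + 1):ℝ)) ^ 2) = fun n : ℕ => 1 / (z + 1 + n) ^ 2 := by
      funext n; push_cast; ring_nf
    exact heq ▸ h
  have hsplit : trigamma z = 1 / z ^ 2 + trigamma (z + 1) := by
    unfold trigamma
    rw [hsum.tsum_eq_zero_add]
    congr 1
    · norm_num
    · apply tsum_congr
      intro j
      push_cast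
      ring_nf
  rw [hsplit]
  have h1 : trigamma (z + 1) < 1 / (z + 1 - 1 / 2) := trigamma_upper (z + 1) hw
  have h2 : 1 / (z + 1 - 1 / 2) < 1 / z := by
    apply one_div_lt_one_div_of_lt hz0
    linarith
  linarith
end

section
/- For every real z > 0, the digamma function satisfies 1/(2z) − 1/(12z²) < ψ(z+1) − log z < 1/(2z). -/
/-- The digamma function: the logarithmic derivative of the Gamma function. -/
noncomputable def digamma (z : ℝ) : ℝ := deriv (fun x => Real.log (Real.Gamma x)) z

open Real Filter Topology Set

private lemma dg_diff {x : ℝ} (hx : 0 < x) :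
    DifferentiableAt ℝ (fun x => Real.log (Real.Gamma x)) x := by
  refine (Real.differentiableAt_Gamma ?_).log (Real.Gamma_ne_zero ?_) <;>
    exact fun m => ne_of_gt (by have := Nat.cast_nonneg (α := ℝ) m; linarith)

private lemma dg_rec {x : ℝ} (hx : 0 < x) : digamma (x + 1) = digamma x + 1 / x := by
  unfold digamma
  rw [← deriv_comp_add_const, one_div, ← Real.deriv_log,
    ← deriv_add (dg_diff hx) (Real.differentiableAt_log hx.ne')]
  apply Filter.EventuallyEq.deriv_eq
  filter_upwards [eventually_gt_nhds hx] with y hy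
  rw [Real.Gamma_add_one hy.ne', Real.log_mul hy.ne' (Real.Gamma_pos_of_pos hy).ne', add_comm]
  rfl

private lemma dg_cvx : ConvexOn ℝ (Set.Ioi 0) (fun x => Real.log (Real.Gamma x)) := by
  simpa [Function.comp_def] using Real.convexOn_log_Gamma

private lemma dg_lb {x : ℝ} (hx : 0 < x) : Real.log x ≤ digamma (x + 1) := by
  have h := dg_cvx.slope_le_deriv (Set.mem_Ioi.mpr hx)
    (Set.mem_Ioi.mpr (by linarith : (0:ℝ) < x + 1)) (by linarith) (dg_diff (by linarith))
  rw [slope_def_field, show x + 1 - x = (1:ℝ) by ring, div_one,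
    Real.Gamma_add_one hx.ne', Real.log_mul hx.ne' (Real.Gamma_pos_of_pos hx).ne',
    add_sub_cancel_right] at h
  exact h

private lemma dg_ub {x : ℝ} (hx : 0 < x) : digamma (x + 1) ≤ Real.log (x + 1) := by
  have h := dg_cvx.deriv_le_slope (Set.mem_Ioi.mpr (by linarith : (0:ℝ) < x + 1))
    (Set.mem_Ioi.mpr (by linarith : (0:ℝ) < x + 2)) (by linarith) (dg_diff (by linarith))
  rw [slope_def_field, show x + 2 - (x + 1) = (1:ℝ) by ring, div_one,
    show x + 2 = (x + 1) + 1 by ring,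
    Real.Gamma_add_one (by linarith : x + 1 ≠ 0),
    Real.log_mul (by linarith : x + 1 ≠ 0) (Real.Gamma_pos_of_pos (by linarith)).ne',
    add_sub_cancel_right] at h
  exact h


private lemma one_div_tendsto_zero {α : Type*} {l : Filter α} {f : α → ℝ}
    (hf : Filter.Tendsto f l Filter.atTop) :
    Filter.Tendsto (fun x => 1 / f x) l (𝓝 0) := by
  have := tendsto_inv_atTop_zero.comp hf
  simpa [one_div, Function.comp_def] using this

private lemma lin_atTop (c : ℝ) : Filter.Tendsto (fun x : ℝ => x + c) Filter.atTop Filter.atTop :=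
  tendsto_atTop_add_const_right _ c tendsto_id

private lemma mul_lin_atTop {α : Type*} {l : Filter α} {f : α → ℝ} (c : ℝ) (hc : 0 < c)
    (hf : Filter.Tendsto f l Filter.atTop) :
    Filter.Tendsto (fun x => c * f x) l Filter.atTop :=
  Filter.Tendsto.const_mul_atTop hc hf

private lemma sq_atTop {α : Type*} {l : Filter α} {f : α → ℝ}
    (hf : Filter.Tendsto f l Filter.atTop) :
    Filter.Tendsto (fun x => f x ^ 2) l Filter.atTop :=
  (tendsto_pow_atTop two_ne_zero).comp hf

private lemma seq_atTop {w : ℝ} : Filter.Tendsto (fun n : ℕ => (w + n : ℝ))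
    Filter.atTop Filter.atTop :=
  tendsto_atTop_add_const_left _ w tendsto_natCast_atTop_atTop

/-- If a function has negative derivative on `(0,∞)` and tends to `0` at `+∞`,
it is positive on `(0,∞)`. -/
private lemma pos_of_deriv_neg (φ φ' : ℝ → ℝ)
    (hd : ∀ x, 0 < x → HasDerivAt φ (φ' x) x)
    (hneg : ∀ x, 0 < x → φ' x < 0)
    (hlim : Filter.Tendsto φ Filter.atTop (𝓝 0)) {z : ℝ} (hz : 0 < z) : 0 < φ z := by
  have hanti : StrictAntiOn φ (Set.Ioi 0) := by
    refine strictAntiOn_of_deriv_neg (convex_Ioi 0) ?_ ?_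
    · intro x hx
      exact ((hd x hx).differentiableAt.continuousAt).continuousWithinAt
    · intro x hx
      rw [interior_Ioi] at hx
      rw [(hd x hx).deriv]
      exact hneg x hx
  have h1 : 0 ≤ φ (z + 1) := by
    refine le_of_tendsto hlim ?_
    filter_upwards [eventually_gt_atTop (z + 1)] with y hy
    exact le_of_lt (hanti (Set.mem_Ioi.mpr (by linarith)) (Set.mem_Ioi.mpr (by linarith)) hy)
  have h2 : φ (z + 1) < φ z := hanti (Set.mem_Ioi.mpr hz) (Set.mem_Ioi.mpr (by linarith))
    (by linarith)
  linarith

/-- If `F w < F (w+1)` for all `w > 0` and `F (w + n) → 0`, then `F` is negative. -/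
private lemma neg_of_step (F : ℝ → ℝ)
    (hstep : ∀ w, 0 < w → F w < F (w + 1))
    (hlim : ∀ w, 0 < w → Filter.Tendsto (fun n : ℕ => F (w + n)) Filter.atTop (𝓝 0))
    {z : ℝ} (hz : 0 < z) : F z < 0 := by
  have key : ∀ n : ℕ, F (z + 1) ≤ F (z + 1 + n) := by
    intro n
    induction n with
    | zero => simp
    | succ n ih =>
      have h := hstep (z + 1 + n) (by positivity)
      push_cast
      refine le_of_lt ?_
      calc F (z + 1) ≤ F (z + 1 + n) := ih
        _ < F (z + 1 + n + 1) := h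
        _ = F (z + 1 + (n + 1)) := by ring_nf
  have h0 : F (z + 1) ≤ 0 := ge_of_tendsto' (hlim (z + 1) (by linarith)) key
  calc F z < F (z + 1) := hstep z hz
    _ ≤ 0 := h0

private lemma log_succ_sub_tendsto :
    Filter.Tendsto (fun x : ℝ => Real.log (x + 1) - Real.log x) Filter.atTop (𝓝 0) := by
  have h1 : Filter.Tendsto (fun x : ℝ => 1 + 1 / x) Filter.atTop (𝓝 1) := by
    have : Filter.Tendsto (fun x : ℝ => 1 / x) Filter.atTop (𝓝 0) := by
      simpa [one_div] using tendsto_inv_atTop_zero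
    simpa using tendsto_const_nhds.add this
  have h2 : Filter.Tendsto (fun x : ℝ => Real.log (1 + 1 / x)) Filter.atTop (𝓝 0) := by
    have := (Real.continuousAt_log (by norm_num : (1:ℝ) ≠ 0)).tendsto.comp h1
    simpa [Function.comp_def] using this
  apply h2.congr'
  filter_upwards [eventually_gt_atTop (0:ℝ)] with x hx
  rw [show 1 + 1 / x = (x + 1) / x by field_simp, Real.log_div (by linarith) hx.ne']

/-- `g (w + n) → 0` where `g w = digamma (w+1) - log w`. -/
private lemma g_tendsto {w : ℝ} (hw : 0 < w) :
    Filter.Tendsto (fun n : ℕ => digamma (w + n + 1) - Real.log (w + n))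
      Filter.atTop (𝓝 0) := by
  have hseq : Filter.Tendsto (fun n : ℕ => (w + n : ℝ)) Filter.atTop Filter.atTop :=
    tendsto_atTop_add_const_left _ w tendsto_natCast_atTop_atTop
  refine tendsto_of_tendsto_of_tendsto_of_le_of_le (f := fun n : ℕ =>
      digamma (w + n + 1) - Real.log (w + n)) (g := fun _ : ℕ => (0:ℝ))
    tendsto_const_nhds (log_succ_sub_tendsto.comp hseq) ?_ ?_
  · intro n
    have hpos : (0:ℝ) < w + n := by positivity
    have := dg_lb hpos
    simp only [sub_nonneg]
    linarith
  · intro n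
    have hpos : (0:ℝ) < w + n := by positivity
    have := dg_ub hpos
    simp only [Function.comp_apply]
    linarith

private lemma g_step {w : ℝ} (hw : 0 < w) :
    (digamma (w + 1) - Real.log w) - (digamma (w + 1 + 1) - Real.log (w + 1)) =
      Real.log (w + 1) - Real.log w - 1 / (w + 1) := by
  rw [dg_rec (by linarith : (0:ℝ) < w + 1)]
  ring

/-- First elementary inequality. -/
private lemma phi1_pos {w : ℝ} (hw : 0 < w) :
    0 < 1 / (2 * w) + 1 / (2 * (w + 1)) - (Real.log (w + 1) - Real.log w) := by
  have key := pos_of_deriv_neg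
    (fun x : ℝ => 1 / (2 * x) + 1 / (2 * (x + 1)) - (Real.log (x + 1) - Real.log x))
    (fun x : ℝ => -(1 / (2 * x ^ 2 * (x + 1) ^ 2))) ?_ ?_ ?_ hw
  · exact key
  · intro x hx
    have hx1 : (0:ℝ) < x + 1 := by linarith
    have h1 : HasDerivAt (fun y : ℝ => 1 / (2 * y)) (-2 / (2 * x) ^ 2) x := by
      have := ((hasDerivAt_id x).const_mul 2).inv (by positivity : 2 * x ≠ 0)
      simpa [one_div, Pi.inv_def] using this
    have h2 : HasDerivAt (fun y : ℝ => 1 / (2 * (y + 1))) (-2 / (2 * (x + 1)) ^ 2) x := by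
      have := (((hasDerivAt_id x).add_const 1).const_mul 2).inv (by positivity : 2 * (x + 1) ≠ 0)
      simpa [one_div, Pi.inv_def] using this
    have h3 : HasDerivAt (fun y : ℝ => Real.log (y + 1)) (1 / (x + 1)) x := by
      have := ((hasDerivAt_id x).add_const 1).log hx1.ne'
      simpa using this
    have h4 : HasDerivAt Real.log (1 / x) x := by
      simpa [one_div] using Real.hasDerivAt_log hx.ne'
    have H := (h1.add h2).sub (h3.sub h4)
    refine H.congr_deriv ?_
    symm
    show -(1 / (2 * x ^ 2 * (x + 1) ^ 2)) = _
    field_simp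
    ring
  · intro x hx
    have h : (0:ℝ) < 1 / (2 * x ^ 2 * (x + 1) ^ 2) := by positivity
    show -(1 / (2 * x ^ 2 * (x + 1) ^ 2)) < 0
    linarith
  · have h1 : Filter.Tendsto (fun x : ℝ => 1 / (2 * x)) Filter.atTop (𝓝 0) := by
      exact one_div_tendsto_zero (mul_lin_atTop 2 (by norm_num) tendsto_id)
    have h2 : Filter.Tendsto (fun x : ℝ => 1 / (2 * (x + 1))) Filter.atTop (𝓝 0) := by
      exact one_div_tendsto_zero (mul_lin_atTop 2 (by norm_num) (lin_atTop 1))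
    simpa using (h1.add h2).sub log_succ_sub_tendsto

/-- Second elementary inequality. -/
private lemma phi2_pos {w : ℝ} (hw : 0 < w) :
    0 < (Real.log (w + 1) - Real.log w) - 1 / (w + 1) - 1 / (2 * w) + 1 / (12 * w ^ 2)
      + 1 / (2 * (w + 1)) - 1 / (12 * (w + 1) ^ 2) := by
  have key := pos_of_deriv_neg
    (fun x : ℝ => (Real.log (x + 1) - Real.log x) - 1 / (x + 1) - 1 / (2 * x)
      + 1 / (12 * x ^ 2) + 1 / (2 * (x + 1)) - 1 / (12 * (x + 1) ^ 2))
    (fun x : ℝ => -(1 / (6 * x ^ 3 * (x + 1) ^ 3))) ?_ ?_ ?_ hw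
  · exact key
  · intro x hx
    have hx1 : (0:ℝ) < x + 1 := by linarith
    have h3 : HasDerivAt (fun y : ℝ => Real.log (y + 1)) (1 / (x + 1)) x := by
      have := ((hasDerivAt_id x).add_const 1).log hx1.ne'
      simpa using this
    have h4 : HasDerivAt Real.log (1 / x) x := by
      simpa [one_div] using Real.hasDerivAt_log hx.ne'
    have h5 : HasDerivAt (fun y : ℝ => 1 / (y + 1)) (-1 / (x + 1) ^ 2) x := by
      have := ((hasDerivAt_id x).add_const 1).inv hx1.ne'
      simpa [one_div, Pi.inv_def] using this
    have h1 : HasDerivAt (fun y : ℝ => 1 / (2 * y)) (-2 / (2 * x) ^ 2) x := by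
      have := ((hasDerivAt_id x).const_mul 2).inv (by positivity : 2 * x ≠ 0)
      simpa [one_div, Pi.inv_def] using this
    have h2 : HasDerivAt (fun y : ℝ => 1 / (2 * (y + 1))) (-2 / (2 * (x + 1)) ^ 2) x := by
      have := (((hasDerivAt_id x).add_const 1).const_mul 2).inv (by positivity : 2 * (x + 1) ≠ 0)
      simpa [one_div, Pi.inv_def] using this
    have h6 : HasDerivAt (fun y : ℝ => 1 / (12 * y ^ 2))
        (-(12 * (2 * x)) / (12 * x ^ 2) ^ 2) x := by
      have hp : HasDerivAt (fun y : ℝ => 12 * y ^ 2) (12 * (2 * x)) x := by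
        have h := (hasDerivAt_pow 2 x).const_mul (12:ℝ)
        refine h.congr_deriv ?_
        push_cast [id_eq]
        ring
      have := hp.inv (by positivity : 12 * x ^ 2 ≠ 0)
      simpa [one_div, Pi.inv_def] using this
    have h7 : HasDerivAt (fun y : ℝ => 1 / (12 * (y + 1) ^ 2))
        (-(12 * (2 * (x + 1))) / (12 * (x + 1) ^ 2) ^ 2) x := by
      have hp : HasDerivAt (fun y : ℝ => 12 * (y + 1) ^ 2) (12 * (2 * (x + 1))) x := by
        have h := (((hasDerivAt_id x).add_const 1).pow 2).const_mul (12:ℝ)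
        refine h.congr_deriv ?_
        push_cast [id_eq]
        ring
      have := hp.inv (by positivity : 12 * (x + 1) ^ 2 ≠ 0)
      simpa [one_div, Pi.inv_def] using this
    have H := ((((((h3.sub h4).sub h5).sub h1).add h6).add h2).sub h7)
    refine H.congr_deriv ?_
    symm
    show -(1 / (6 * x ^ 3 * (x + 1) ^ 3)) = _
    field_simp
    ring
  · intro x hx
    have h : (0:ℝ) < 1 / (6 * x ^ 3 * (x + 1) ^ 3) := by positivity
    show -(1 / (6 * x ^ 3 * (x + 1) ^ 3)) < 0
    linarith
  · have h1 : Filter.Tendsto (fun x : ℝ => 1 / (2 * x)) Filter.atTop (𝓝 0) := by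
      exact one_div_tendsto_zero (mul_lin_atTop 2 (by norm_num) tendsto_id)
    have h2 : Filter.Tendsto (fun x : ℝ => 1 / (2 * (x + 1))) Filter.atTop (𝓝 0) := by
      exact one_div_tendsto_zero (mul_lin_atTop 2 (by norm_num) (lin_atTop 1))
    have h5 : Filter.Tendsto (fun x : ℝ => 1 / (x + 1)) Filter.atTop (𝓝 0) := by
      exact one_div_tendsto_zero (lin_atTop 1)
    have h6 : Filter.Tendsto (fun x : ℝ => 1 / (12 * x ^ 2)) Filter.atTop (𝓝 0) := by
      exact one_div_tendsto_zero (mul_lin_atTop 12 (by norm_num) (sq_atTop tendsto_id))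
    have h7 : Filter.Tendsto (fun x : ℝ => 1 / (12 * (x + 1) ^ 2)) Filter.atTop (𝓝 0) := by
      exact one_div_tendsto_zero (mul_lin_atTop 12 (by norm_num) (sq_atTop (lin_atTop 1)))
    simpa using ((((log_succ_sub_tendsto.sub h5).sub h1).add h6).add h2).sub h7

theorem digamma_bounds (z : ℝ) (hz : 0 < z) :
    1 / (2 * z) - 1 / (12 * z ^ 2) < digamma (z + 1) - Real.log z ∧
    digamma (z + 1) - Real.log z < 1 / (2 * z) := by
  have hseqinv : ∀ w : ℝ, 0 < w →
      Filter.Tendsto (fun n : ℕ => 1 / (2 * (w + n))) Filter.atTop (𝓝 0) := by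
    intro w hw
    exact one_div_tendsto_zero (mul_lin_atTop 2 (by norm_num) seq_atTop)
  constructor
  · -- lower bound
    have key := neg_of_step
      (fun w => 1 / (2 * w) - 1 / (12 * w ^ 2) - (digamma (w + 1) - Real.log w)) ?_ ?_ hz
    · have key' : 1 / (2 * z) - 1 / (12 * z ^ 2) - (digamma (z + 1) - Real.log z) < 0 := key
      linarith
    · intro w hw
      have h1 := g_step hw
      have h2 := phi2_pos hw
      show 1 / (2 * w) - 1 / (12 * w ^ 2) - (digamma (w + 1) - Real.log w) <
        1 / (2 * (w + 1)) - 1 / (12 * (w + 1) ^ 2) - (digamma (w + 1 + 1) - Real.log (w + 1))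
      linarith
    · intro w hw
      have h1 := g_tendsto hw
      have h2 := hseqinv w hw
      have h3 : Filter.Tendsto (fun n : ℕ => 1 / (12 * ((w:ℝ) + n) ^ 2)) Filter.atTop (𝓝 0) := by
        exact one_div_tendsto_zero (mul_lin_atTop 12 (by norm_num) (sq_atTop seq_atTop))
      simpa using (h2.sub h3).sub h1
  · -- upper bound
    have key := neg_of_step
      (fun w => digamma (w + 1) - Real.log w - 1 / (2 * w)) ?_ ?_ hz
    · have key' : digamma (z + 1) - Real.log z - 1 / (2 * z) < 0 := key
      linarith
    · intro w hw
      have h1 := g_step hw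
      have h2 := phi1_pos hw
      have e1 : 1 / (w + 1) = 1 / (2 * (w + 1)) + 1 / (2 * (w + 1)) := by
        rw [← add_div]
        rw [show (1:ℝ) + 1 = 2 by norm_num]
        rw [eq_div_iff (by positivity : 2 * (w + 1) ≠ 0)]
        field_simp
      show digamma (w + 1) - Real.log w - 1 / (2 * w) <
        digamma (w + 1 + 1) - Real.log (w + 1) - 1 / (2 * (w + 1))
      linarith
    · intro w hw
      have h1 := g_tendsto hw
      have h2 := hseqinv w hw
      simpa using h1.sub h2
end

section
/- For every real z > 0, log Γ(z) = (1/2)log(2π) + (z − 1/2) log z − z + R(z), where the remainder satisfies 0 < R(z) < 1/(12z). -/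
open Filter Real Finset

noncomputable def binetF (x : ℝ) : ℝ :=
  Real.log (Real.Gamma x) - ((x - 1/2) * Real.log x - x + Real.log (2*Real.pi)/2)

noncomputable def binetG (x : ℝ) : ℝ := (x + 1/2) * Real.log (1 + 1/x) - 1


lemma binetG_hasSum {x : ℝ} (hx : 0 < x) :
    HasSum (fun k : ℕ => (1/(2*x+1)) ^ (2*(k+1)) / (2*((k:ℝ)+1) + 1)) (binetG x) := by
  set t : ℝ := 1/(2*x+1) with ht
  have h := (Real.hasSum_log_one_add_inv hx).mul_left (x + 1/2)
  have h1 : (x + 1/2) * 2 * t = 1 := by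
    rw [ht]; field_simp
  have heq : (fun k : ℕ => (x + 1/2) * ((2:ℝ) * (1 / (2*(k:ℝ) + 1)) * t ^ (2*k+1)))
      = fun k : ℕ => t ^ (2*k) / (2*(k:ℝ) + 1) := by
    funext k
    have e : (x + 1/2) * ((2:ℝ) * (1 / (2*(k:ℝ) + 1)) * (t^(2*k) * t))
        = ((x+1/2) * 2 * t) * t^(2*k) * (1/(2*(k:ℝ)+1)) := by ring
    rw [pow_succ, e, h1, one_mul, mul_one_div]
  rw [heq] at h
  have h2 := (hasSum_nat_add_iff' (f := fun k : ℕ => t ^ (2*k) / (2*(k:ℝ) + 1)) 1).2 h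
  simp only [Finset.range_one, Finset.sum_singleton, Nat.cast_zero, mul_zero, pow_zero] at h2
  have h3 : (x + 1/2) * Real.log (1 + x⁻¹) - 1/(0+1) = binetG x := by
    simp [binetG, one_div]
  rw [h3] at h2
  have h4 : (fun n : ℕ => t^(2*(n+1))/(2*(↑(n+1):ℝ)+1))
      = fun n : ℕ => (1/(2*x+1))^(2*(n+1))/(2*((n:ℝ)+1)+1) := by
    funext n; rw [← ht]; push_cast; ring_nf
  rw [h4] at h2
  exact h2

lemma binetG_pos {x : ℝ} (hx : 0 < x) : 0 < binetG x := by
  have ht0 : 0 < 1/(2*x+1) := by positivity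
  refine hasSum_lt (f := fun _ : ℕ => (0:ℝ)) (i := 0) (fun k => by positivity) ?_
    hasSum_zero (binetG_hasSum hx)
  simp only [Nat.cast_zero]
  positivity

lemma binetG_lt {x : ℝ} (hx : 0 < x) : binetG x < 1/(12*x*(x+1)) := by
  set t : ℝ := 1/(2*x+1) with ht
  have ht0 : 0 < t := by positivity
  have ht1 : t < 1 := by
    rw [ht, div_lt_one (by positivity)]; linarith
  have ht2 : t^2 < 1 := by nlinarith
  have hgeo := (hasSum_geometric_of_lt_one (by positivity : (0:ℝ) ≤ t^2) ht2).mul_left (t^2/3)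
  have hsum : (t^2/3) * (1 - t^2)⁻¹ = 1/(12*x*(x+1)) := by
    have hne : (2*x+1) ≠ 0 := by positivity
    have hx1 : (x+1) ≠ 0 := by positivity
    have e2 : (1:ℝ) - t^2 = (4*x*(x+1))/(2*x+1)^2 := by
      rw [ht, div_pow]; field_simp; ring
    rw [e2, ht, div_pow, inv_div]
    field_simp
    ring
  rw [← hsum]
  have hle : (fun k : ℕ => (1/(2*x+1)) ^ (2*(k+1)) / (2*((k:ℝ)+1) + 1))
      ≤ fun k : ℕ => t^2/3 * (t^2)^k := by
    intro k
    simp only [← ht]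
    rw [show t^2/3 * (t^2)^k = t^(2*(k+1))/3 by rw [← pow_mul]; ring]
    apply div_le_div_of_nonneg_left (by positivity) (by norm_num)
    have : (0:ℝ) ≤ (k:ℝ) := Nat.cast_nonneg k
    linarith
  refine hasSum_lt (i := 1) hle ?_ (binetG_hasSum hx) hgeo
  show (1/(2*x+1)) ^ (2*(1+1)) / (2*(((1:ℕ):ℝ)+1) + 1) < t^2/3 * (t^2)^1
  rw [← ht, show t^2/3 * (t^2)^1 = t^4/3 by ring]
  have h40 : (0:ℝ) < t^4 := by positivity
  norm_num
  rw [div_lt_div_iff₀ (by norm_num) (by norm_num)]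
  nlinarith



lemma binetF_rec {x : ℝ} (hx : 0 < x) : binetF x = binetG x + binetF (x+1) := by
  have hΓ : Real.Gamma (x+1) = x * Real.Gamma x := Real.Gamma_add_one hx.ne'
  have hΓpos : 0 < Real.Gamma x := Real.Gamma_pos_of_pos hx
  have hlog : Real.log (Real.Gamma (x+1)) = Real.log x + Real.log (Real.Gamma x) := by
    rw [hΓ, Real.log_mul hx.ne' hΓpos.ne']
  have hlog2 : Real.log (1 + 1/x) = Real.log (x+1) - Real.log x := by
    rw [show (1:ℝ) + 1/x = (x+1)/x by field_simp, Real.log_div (by positivity) hx.ne']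
  simp only [binetF, binetG, hlog, hlog2]
  ring

lemma binetF_nat_tendsto : Tendsto (fun n : ℕ => binetF n) atTop (nhds 0) := by
  have hπ : 0 < Real.sqrt Real.pi := Real.sqrt_pos.2 Real.pi_pos
  have h1 : Tendsto (fun n : ℕ => Real.log (Stirling.stirlingSeq n) - Real.log (Real.sqrt Real.pi))
      atTop (nhds 0) := by
    have := ((Real.continuousAt_log hπ.ne').tendsto.comp Stirling.tendsto_stirlingSeq_sqrt_pi).sub
      (tendsto_const_nhds (x := Real.log (Real.sqrt Real.pi)))
    simpa using this
  refine h1.congr' ?_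
  filter_upwards [eventually_ge_atTop 1] with n hn
  have hn0 : (0:ℝ) < n := by exact_mod_cast hn
  have hfact : Real.log (n.factorial : ℝ) = Real.log n + Real.log (Real.Gamma n) := by
    have : ((n:ℝ)) * Real.Gamma n = (n.factorial : ℝ) := by
      rw [← Real.Gamma_add_one (by positivity : (n:ℝ) ≠ 0)]
      exact_mod_cast Real.Gamma_nat_eq_factorial n
    rw [← this, Real.log_mul hn0.ne' (Real.Gamma_pos_of_pos hn0).ne']
  rw [Stirling.log_stirlingSeq_formula, binetF, hfact,
    Real.log_mul two_ne_zero hn0.ne', Real.log_div hn0.ne' (Real.exp_ne_zero 1),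
    Real.log_exp, Real.log_mul two_ne_zero Real.pi_pos.ne', Real.log_sqrt Real.pi_pos.le]
  ring



lemma tendsto_aux (s c : ℝ) :
    Tendsto (fun x : ℝ => (x + c) * Real.log (1 + s/x)) atTop (nhds s) := by
  have h1 := Real.tendsto_mul_log_one_add_div_atTop s
  have h2 : Tendsto (fun x : ℝ => Real.log (1 + s/x)) atTop (nhds 0) := by
    have hd : Tendsto (fun x : ℝ => 1 + s/x) atTop (nhds 1) := by
      have : Tendsto (fun x : ℝ => s/x) atTop (nhds 0) :=
        Tendsto.div_atTop tendsto_const_nhds tendsto_id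
      simpa using tendsto_const_nhds.add this
    have := (Real.continuousAt_log one_ne_zero).tendsto.comp hd
    simpa [Function.comp_def] using this
  have h3 := h1.add (h2.const_mul c)
  simp only [mul_zero, add_zero] at h3
  refine Tendsto.congr (fun x => ?_) h3
  ring

-- upper bound from convexity
lemma binetF_ub {n t : ℝ} (hn : 1 ≤ n) (ht0 : 0 ≤ t) (ht1 : t < 1) :
    binetF (n + t) ≤ (1-t) * binetF n + t * binetF (n+1)
      + (t * binetG n - ((n+t-1/2) * Real.log (1 + t/n) - t)) := by
  have hn0 : (0:ℝ) < n := by linarith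
  have hcx := Real.convexOn_log_Gamma.2 (Set.mem_Ioi.2 hn0)
    (Set.mem_Ioi.2 (by linarith : (0:ℝ) < n+1)) (by linarith : (0:ℝ) ≤ 1-t) ht0 (by ring)
  simp only [smul_eq_mul, Function.comp] at hcx
  have harg : (1-t) * n + t * (n+1) = n + t := by ring
  rw [harg] at hcx
  have l1 : Real.log (1+1/n) = Real.log (n+1) - Real.log n := by
    rw [show (1:ℝ) + 1/n = (n+1)/n by field_simp, Real.log_div (by positivity) hn0.ne']
  have l2 : Real.log (1+t/n) = Real.log (n+t) - Real.log n := by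
    rw [show (1:ℝ) + t/n = (n+t)/n by field_simp, Real.log_div (by positivity) hn0.ne']
  have key : (1-t) * binetF n + t * binetF (n+1)
      + (t * binetG n - ((n+t-1/2) * Real.log (1 + t/n) - t))
      = (1-t) * Real.log (Real.Gamma n) + t * Real.log (Real.Gamma (n+1))
        - ((n+t-1/2) * Real.log (n+t) - (n+t) + Real.log (2*Real.pi)/2) := by
    simp only [binetF, binetG, l1, l2]; ring
  rw [key]
  have : binetF (n+t) = Real.log (Real.Gamma (n+t))
      - ((n+t-1/2) * Real.log (n+t) - (n+t) + Real.log (2*Real.pi)/2) := by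
    simp [binetF]
  rw [this]
  linarith [hcx]

-- lower bound from convexity (slope comparison)
lemma binetF_lb {n t : ℝ} (hn : 1 ≤ n) (ht0 : 0 ≤ t) (ht1 : t < 1) :
    binetF (n+1) + ((n+t-1/2) * Real.log (1 + (1-t)/(n+t)) - (1-t)) ≤ binetF (n + t) := by
  have hn0 : (0:ℝ) < n := by linarith
  have hnt : (0:ℝ) < n + t := by linarith
  have hsl := Real.convexOn_log_Gamma.slope_mono_adjacent
    (Set.mem_Ioi.2 hnt) (Set.mem_Ioi.2 (by linarith : (0:ℝ) < n+2))
    (by linarith : n + t < n+1) (by linarith : n+1 < n+2)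
  simp only [Function.comp] at hsl
  have hΓ : Real.log (Real.Gamma (n+2)) = Real.log (n+1) + Real.log (Real.Gamma (n+1)) := by
    rw [show (n:ℝ)+2 = (n+1)+1 by ring, Real.Gamma_add_one (by positivity : (n:ℝ)+1 ≠ 0),
      Real.log_mul (by positivity) (Real.Gamma_pos_of_pos (by linarith)).ne']
  rw [hΓ] at hsl
  have hd1 : n + 2 - (n+1) = (1:ℝ) := by ring
  rw [hd1, div_one] at hsl
  have h1t : (0:ℝ) < n + 1 - (n+t) := by linarith
  rw [div_le_iff₀ h1t] at hsl
  -- hsl : log Γ(n+1) - log Γ(n+t) ≤ (log (n+1)) * (n+1-(n+t))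
  have l3 : Real.log (1 + (1-t)/(n+t)) = Real.log (n+1) - Real.log (n+t) := by
    rw [show (1:ℝ) + (1-t)/(n+t) = (n+1)/(n+t) by field_simp; ring,
      Real.log_div (by positivity) hnt.ne']
  have key : binetF (n+1) + ((n+t-1/2) * Real.log (1 + (1-t)/(n+t)) - (1-t))
      = Real.log (Real.Gamma (n+1)) - (1-t) * Real.log (n+1)
        - ((n+t-1/2) * Real.log (n+t) - (n+t) + Real.log (2*Real.pi)/2) := by
    simp only [binetF, l3]; ring
  rw [key]
  have : binetF (n+t) = Real.log (Real.Gamma (n+t))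
      - ((n+t-1/2) * Real.log (n+t) - (n+t) + Real.log (2*Real.pi)/2) := by
    simp [binetF]
  rw [this]
  nlinarith [hsl]

lemma binetF_shift_tendsto {z : ℝ} (hz : 0 < z) :
    Tendsto (fun N : ℕ => binetF (z + N)) atTop (nhds 0) := by
  set m : ℕ := ⌊z⌋₊ with hm
  set t : ℝ := z - m with htdef
  have ht0 : 0 ≤ t := sub_nonneg.2 (Nat.floor_le hz.le)
  have ht1 : t < 1 := by
    have := Nat.lt_floor_add_one z
    rw [htdef]; push_cast; linarith
  -- the real sequence n_N = m + N
  have hcast : Tendsto (fun N : ℕ => ((m:ℝ) + N)) atTop atTop :=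
    tendsto_atTop_add_const_left _ _ tendsto_natCast_atTop_atTop
  have hcast' : Tendsto (fun N : ℕ => ((m:ℝ) + N + t)) atTop atTop :=
    tendsto_atTop_add_const_right _ _ hcast
  have hFm : Tendsto (fun N : ℕ => binetF ((m:ℝ) + N)) atTop (nhds 0) := by
    have := binetF_nat_tendsto.comp (tendsto_add_atTop_nat m)
    refine this.congr fun N => ?_
    simp only [Function.comp]
    push_cast
    ring_nf
  have hFm1 : Tendsto (fun N : ℕ => binetF ((m:ℝ) + N + 1)) atTop (nhds 0) := by
    have := binetF_nat_tendsto.comp (tendsto_add_atTop_nat (m+1))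
    refine this.congr fun N => ?_
    simp only [Function.comp]
    push_cast
    ring_nf
  have hG : Tendsto (fun N : ℕ => binetG ((m:ℝ) + N)) atTop (nhds 0) := by
    have hb : Tendsto binetG atTop (nhds 0) := by
      have := (tendsto_aux 1 (1/2)).sub_const 1
      rw [sub_self] at this
      exact this.congr fun x => by simp [binetG]
    exact hb.comp hcast
  have hT2 : Tendsto (fun N : ℕ => ((m:ℝ) + N + t - 1/2) * Real.log (1 + t/((m:ℝ)+N)))
      atTop (nhds t) := by
    have := (tendsto_aux t (t - 1/2)).comp hcast
    refine this.congr fun N => ?_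
    simp only [Function.comp]
    ring_nf
  have hT3 : Tendsto (fun N : ℕ => ((m:ℝ) + N + t - 1/2) * Real.log (1 + (1-t)/((m:ℝ)+N+t)))
      atTop (nhds (1-t)) := by
    have := (tendsto_aux (1-t) (-(1/2))).comp hcast'
    refine this.congr fun N => ?_
    simp only [Function.comp]
    ring_nf
  have hU : Tendsto (fun N : ℕ => (1-t) * binetF ((m:ℝ)+N) + t * binetF ((m:ℝ)+N+1)
      + (t * binetG ((m:ℝ)+N) - (((m:ℝ)+N+t-1/2) * Real.log (1 + t/((m:ℝ)+N)) - t)))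
      atTop (nhds 0) := by
    have h := ((hFm.const_mul (1-t)).add (hFm1.const_mul t)).add
      ((hG.const_mul t).sub (hT2.sub_const t))
    simpa using h
  have hL : Tendsto (fun N : ℕ => binetF ((m:ℝ)+N+1)
      + (((m:ℝ)+N+t-1/2) * Real.log (1 + (1-t)/((m:ℝ)+N+t)) - (1-t)))
      atTop (nhds 0) := by
    have h := hFm1.add (hT3.sub_const (1-t))
    simpa using h
  have heq : ∀ N : ℕ, z + N = ((m:ℝ) + N) + t := by
    intro N; rw [htdef]; ring
  refine tendsto_of_tendsto_of_tendsto_of_le_of_le' hL hU ?_ ?_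
  · filter_upwards [eventually_ge_atTop 1] with N hN
    have hn : (1:ℝ) ≤ (m:ℝ) + N := by
      have : (1:ℝ) ≤ (N:ℝ) := by exact_mod_cast hN
      have : (0:ℝ) ≤ (m:ℝ) := Nat.cast_nonneg m
      linarith
    rw [heq N]
    exact binetF_lb hn ht0 ht1
  · filter_upwards [eventually_ge_atTop 1] with N hN
    have hn : (1:ℝ) ≤ (m:ℝ) + N := by
      have h1 : (1:ℝ) ≤ (N:ℝ) := by exact_mod_cast hN
      have h2 : (0:ℝ) ≤ (m:ℝ) := Nat.cast_nonneg m
      linarith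
    rw [heq N]
    exact binetF_ub hn ht0 ht1




lemma binetF_telescope {w : ℝ} (hw : 0 < w) (N : ℕ) :
    binetF w = (∑ k ∈ Finset.range N, binetG (w + k)) + binetF (w + N) := by
  induction N with
  | zero => simp
  | succ n ih =>
    rw [ih, Finset.sum_range_succ]
    have h : binetF (w + n) = binetG (w + n) + binetF (w + n + 1) :=
      binetF_rec (by positivity)
    rw [h]
    push_cast
    ring

lemma binetF_bounds {w : ℝ} (hw : 0 < w) : 0 ≤ binetF w ∧ binetF w ≤ 1/(12*w) := by
  have htend : Tendsto (fun N : ℕ => binetF w - binetF (w + N)) atTop (nhds (binetF w)) := by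
    have := (tendsto_const_nhds (x := binetF w) (f := atTop (α := ℕ))).sub
      (binetF_shift_tendsto hw)
    simpa using this
  constructor
  · refine ge_of_tendsto htend ?_
    filter_upwards with N
    rw [binetF_telescope hw N]
    have : 0 ≤ ∑ k ∈ Finset.range N, binetG (w + k) :=
      Finset.sum_nonneg fun k _ => (binetG_pos (by positivity)).le
    linarith
  · refine le_of_tendsto htend ?_
    filter_upwards with N
    rw [binetF_telescope hw N]
    have hb : ∑ k ∈ Finset.range N, binetG (w + k)
        ≤ ∑ k ∈ Finset.range N, (1/(12*(w+k)) - 1/(12*(w+k+1))) := by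
      refine Finset.sum_le_sum fun k _ => ?_
      have hwk : (0:ℝ) < w + k := by positivity
      have := (binetG_lt hwk).le
      have heq : 1/(12*(w+k)*((w+k)+1)) = 1/(12*(w+(k:ℝ))) - 1/(12*(w+(k:ℝ)+1)) := by
        rw [div_sub_div _ _ (by positivity) (by positivity)]
        rw [div_eq_div_iff (by positivity) (by positivity)]
        ring
      linarith [this, heq.ge]
    have htel : ∑ k ∈ Finset.range N, (1/(12*(w+(k:ℝ))) - 1/(12*(w+(k:ℝ)+1)))
        = 1/(12*w) - 1/(12*(w+N)) := by
      have e : ∀ k : ℕ, 1/(12*(w+(k:ℝ))) - 1/(12*(w+(k:ℝ)+1))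
          = (fun j : ℕ => 1/(12*(w+(j:ℝ)))) k - (fun j : ℕ => 1/(12*(w+(j:ℝ)))) (k+1) := by
        intro k; push_cast; ring
      rw [Finset.sum_congr rfl fun k _ => e k,
        Finset.sum_range_sub' (f := fun k : ℕ => 1/(12*(w+(k:ℝ))))]
      norm_num
    rw [htel] at hb
    have : (0:ℝ) < 12*(w+N) := by positivity
    have h2 : 0 < 1/(12*(w+(N:ℝ))) := by positivity
    linarith

theorem stirling_binet (z : ℝ) (hz : 0 < z) :
    ∃ R : ℝ, Real.log (Real.Gamma z) =
        Real.log (2 * Real.pi) / 2 + (z - 1 / 2) * Real.log z - z + R ∧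
      0 < R ∧ R < 1 / (12 * z) := by
  refine ⟨binetF z, by simp [binetF]; ring, ?_, ?_⟩
  · have h1 := binetG_pos hz
    have h2 := (binetF_bounds (by positivity : (0:ℝ) < z + 1)).1
    rw [binetF_rec hz]
    linarith
  · have h1 := binetG_lt hz
    have h2 := (binetF_bounds (by positivity : (0:ℝ) < z + 1)).2
    rw [binetF_rec hz]
    have heq : 1/(12*z*(z+1)) = 1/(12*z) - 1/(12*(z+1)) := by
      rw [div_sub_div _ _ (by positivity) (by positivity),
        div_eq_div_iff (by positivity) (by positivity)]
      ring
    linarith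
end

section
/- Let β₀,…,β_d > 0 with β = Σ_{j=0}^d β_j. Then Σ_{j=0}^d β_j ψ(β_j) − β ψ(β) − d < (Σ_{j=0}^d β_j log β_j − β log β) − d/2 + 1/(12β), where ψ is the digamma function. -/
open Real Filter

lemma logGamma_diffAt {z : ℝ} (hz : 0 < z) :
    DifferentiableAt ℝ (fun x => Real.log (Real.Gamma x)) z := by
  have h : ∀ m : ℕ, z ≠ -(m : ℝ) := by
    intro m
    have : (0:ℝ) ≤ m := Nat.cast_nonneg m
    intro he; rw [he] at hz; linarith
  exact (Real.differentiableAt_Gamma h).log (Real.Gamma_pos_of_pos hz).ne'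

lemma logGamma_add_one {z : ℝ} (hz : 0 < z) :
    Real.log (Real.Gamma (z + 1)) = Real.log z + Real.log (Real.Gamma z) := by
  rw [Real.Gamma_add_one hz.ne', Real.log_mul hz.ne' (Real.Gamma_pos_of_pos hz).ne']

lemma digamma_add_one {z : ℝ} (hz : 0 < z) : digamma (z + 1) = digamma z + 1 / z := by
  have h1 : digamma (z + 1) = deriv (fun x => Real.log (Real.Gamma (x + 1))) z := by
    exact (deriv_comp_add_const (fun x => Real.log (Real.Gamma x)) 1 z).symm
  have hev : (fun x => Real.log (Real.Gamma (x + 1)))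
      =ᶠ[nhds z] fun x => Real.log x + Real.log (Real.Gamma x) := by
    filter_upwards [eventually_gt_nhds hz] with x hx
    exact logGamma_add_one hx
  rw [h1, hev.deriv_eq, deriv_fun_add (Real.differentiableAt_log hz.ne') (logGamma_diffAt hz),
    Real.deriv_log]
  unfold digamma
  rw [one_div]
  ring

lemma log_le_digamma_add_one {z : ℝ} (hz : 0 < z) : Real.log z ≤ digamma (z + 1) := by
  have h := Real.convexOn_log_Gamma.slope_le_deriv (Set.mem_Ioi.mpr hz)
    (Set.mem_Ioi.mpr (by linarith : (0:ℝ) < z + 1)) (by linarith)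
    ((logGamma_diffAt (by linarith : (0:ℝ) < z + 1)))
  rw [slope_def_field] at h
  simp only [Function.comp] at h
  have he : Real.log (Real.Gamma (z + 1)) - Real.log (Real.Gamma z) = Real.log z := by
    rw [logGamma_add_one hz]; ring
  have : digamma (z + 1) = deriv (Real.log ∘ Real.Gamma) (z + 1) := rfl
  rw [this]
  calc Real.log z = (Real.log (Real.Gamma (z+1)) - Real.log (Real.Gamma z)) / (z + 1 - z) := by
        rw [he]; simp
    _ ≤ deriv (Real.log ∘ Real.Gamma) (z + 1) := by
        convert h using 2 <;> simp [Function.comp]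

lemma digamma_add_one_le_log_add_one {z : ℝ} (hz : 0 < z) :
    digamma (z + 1) ≤ Real.log (z + 1) := by
  have h := Real.convexOn_log_Gamma.deriv_le_slope (Set.mem_Ioi.mpr (by linarith : (0:ℝ) < z + 1))
    (Set.mem_Ioi.mpr (by linarith : (0:ℝ) < z + 1 + 1)) (by linarith)
    ((logGamma_diffAt (by linarith : (0:ℝ) < z + 1)))
  rw [slope_def_field] at h
  have he : Real.log (Real.Gamma (z + 1 + 1)) - Real.log (Real.Gamma (z + 1)) =
      Real.log (z + 1) := by
    rw [logGamma_add_one (by linarith : (0:ℝ) < z + 1)]; ring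
  have hd : digamma (z + 1) = deriv (Real.log ∘ Real.Gamma) (z + 1) := rfl
  rw [hd]
  calc deriv (Real.log ∘ Real.Gamma) (z + 1)
      ≤ ((Real.log ∘ Real.Gamma) (z + 1 + 1) - (Real.log ∘ Real.Gamma) (z + 1)) /
          (z + 1 + 1 - (z + 1)) := h
    _ = Real.log (z + 1) := by
        simp only [Function.comp_apply]
        rw [he]
        have h1 : z + 1 + 1 - (z + 1) = 1 := by ring
        rw [h1, div_one]

lemma log_step {z : ℝ} (hz : 0 < z) :
    Real.log (z + 1) - Real.log z ≤ 1 / (2 * z) + 1 / (2 * (z + 1)) := by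
  have hu : (1:ℝ) < (z + 1) / z := by rw [lt_div_iff₀ hz]; linarith
  have hx : 0 < Real.log ((z + 1) / z) := Real.log_pos hu
  have hs : Real.log ((z + 1) / z) < Real.sinh (Real.log ((z + 1) / z)) :=
    Real.self_lt_sinh_iff.mpr hx
  have hup : (0:ℝ) < (z + 1) / z := by positivity
  have hsinh : Real.sinh (Real.log ((z + 1) / z)) = ((z + 1) / z - z / (z + 1)) / 2 := by
    rw [Real.sinh_eq, Real.exp_log hup, ← Real.log_inv, Real.exp_log (by positivity)]
    congr 2
    field_simp
  rw [hsinh, Real.log_div (by linarith) hz.ne'] at hs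
  have he : ((z + 1) / z - z / (z + 1)) / 2 = 1 / (2 * z) + 1 / (2 * (z + 1)) := by
    field_simp
    ring
  linarith [he ▸ hs]

lemma F_step {z : ℝ} (hz : 0 < z) :
    digamma (z + 1) - Real.log z - 1 / (2 * z) ≤
      digamma (z + 1 + 1) - Real.log (z + 1) - 1 / (2 * (z + 1)) := by
  rw [digamma_add_one (by linarith : (0:ℝ) < z + 1)]
  have h := log_step hz
  have h1 : 1 / (z + 1) - 1 / (2 * (z + 1)) = 1 / (2 * (z + 1)) := by
    field_simp; ring
  linarith

lemma F_le_shift {z : ℝ} (hz : 0 < z) (n : ℕ) :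
    digamma (z + 1) - Real.log z - 1 / (2 * z) ≤
      digamma (z + n + 1) - Real.log (z + n) - 1 / (2 * (z + n)) := by
  induction n with
  | zero => simp
  | succ n ih =>
      have hzn : 0 < z + n := by positivity
      have := F_step hzn
      push_cast
      have harr : z + (n + 1 : ℝ) = z + n + 1 := by ring
      rw [harr]
      linarith

lemma digamma_add_one_le {z : ℝ} (hz : 0 < z) :
    digamma (z + 1) ≤ Real.log z + 1 / (2 * z) := by
  have key : ∀ n : ℕ, digamma (z + 1) - Real.log z - 1 / (2 * z) ≤ 1 / (2 * (z + n)) := by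
    intro n
    have hzn : 0 < z + n := by positivity
    have h1 := F_le_shift hz n
    have h2 : digamma (z + n + 1) ≤ Real.log (z + n + 1) := digamma_add_one_le_log_add_one hzn
    have h3 : Real.log (z + n + 1) - Real.log (z + n) ≤ 1 / (z + n) := by
      have := Real.log_le_sub_one_of_pos (x := (z + n + 1) / (z + n)) (by positivity)
      rw [Real.log_div (by linarith) hzn.ne'] at this
      have : Real.log (z + n + 1) - Real.log (z + n) ≤ (z + n + 1) / (z + n) - 1 := this
      have he : (z + n + 1) / (z + n) - 1 = 1 / (z + n) := by field_simp; ring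
      linarith [he ▸ this]
    have h4 : 1 / (z + n) - 1 / (2 * (z + n)) = 1 / (2 * (z + n)) := by field_simp; ring
    linarith
  have hlim : Tendsto (fun n : ℕ => 1 / (2 * (z + n))) atTop (nhds 0) := by
    have h1 : Tendsto (fun n : ℕ => 2 * (z + (n : ℝ))) atTop atTop := by
      apply Tendsto.const_mul_atTop two_pos
      exact tendsto_atTop_add_const_left _ _ tendsto_natCast_atTop_atTop
    simp only [one_div]
    exact h1.inv_tendsto_atTop
  have := ge_of_tendsto' hlim key
  linarith

theorem digamma_sum_bound (d : ℕ) (β : Fin (d + 1) → ℝ) (hβ : ∀ j, 0 < β j) :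
    ∑ j, β j * digamma (β j) - (∑ j, β j) * digamma (∑ j, β j) - d <
      (∑ j, β j * Real.log (β j) - (∑ j, β j) * Real.log (∑ j, β j)) -
        d / 2 + 1 / (12 * ∑ j, β j) := by
  have hS : 0 < ∑ j, β j := Finset.sum_pos (fun j _ => hβ j) Finset.univ_nonempty
  set S := ∑ j, β j with hSdef
  rcases Nat.eq_zero_or_pos d with hd | hd
  · subst hd
    have h0 : S = β 0 := by rw [hSdef, Fin.sum_univ_one]
    have h1 : ∑ j, β j * digamma (β j) = β 0 * digamma (β 0) := Fin.sum_univ_one _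
    have h2 : ∑ j, β j * Real.log (β j) = β 0 * Real.log (β 0) := Fin.sum_univ_one _
    have h3 : 0 < 1 / (12 * S) := by positivity
    rw [h0] at h3
    rw [h1, h2, h0]
    push_cast
    linarith
  · -- d ≥ 1
    have hd1 : (1:ℝ) ≤ d := by exact_mod_cast hd
    -- per-term equation and bound
    have hterm : ∀ j, β j * digamma (β j) ≤ β j * Real.log (β j) - 1 / 2 := by
      intro j
      have hb := hβ j
      have heq : digamma (β j) = digamma (β j + 1) - 1 / β j := by
        rw [digamma_add_one hb]; ring
      have hub := digamma_add_one_le hb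
      have hmul : β j * (1 / β j) = 1 := by field_simp
      have hmul2 : β j * (1 / (2 * β j)) = 1 / 2 := by field_simp
      calc β j * digamma (β j) = β j * digamma (β j + 1) - 1 := by
            rw [heq]; rw [mul_sub, hmul]
        _ ≤ β j * (Real.log (β j) + 1 / (2 * β j)) - 1 :=
            by nlinarith [hβ j]
        _ = β j * Real.log (β j) - 1 / 2 := by rw [mul_add, hmul2]; ring
    have hsum : ∑ j, β j * digamma (β j) ≤ ∑ j, β j * Real.log (β j) - (d + 1) / 2 := by
      have h := Finset.sum_le_sum (s := Finset.univ) (fun j _ => hterm j)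
      rw [Finset.sum_sub_distrib, Finset.sum_const, Finset.card_univ, Fintype.card_fin] at h
      simp only [nsmul_eq_mul] at h
      push_cast at h
      calc ∑ j, β j * digamma (β j) ≤ ∑ j, β j * Real.log (β j) - (↑d + 1) * (1/2) := h
        _ = ∑ j, β j * Real.log (β j) - (d + 1) / 2 := by ring
    have hSlow : S * Real.log S - 1 ≤ S * digamma S := by
      have heq : digamma S = digamma (S + 1) - 1 / S := by
        rw [digamma_add_one hS]; ring
      have hlb := log_le_digamma_add_one hS
      have hmul : S * (1 / S) = 1 := by field_simp
      calc S * Real.log S - 1 ≤ S * digamma (S + 1) - 1 := by nlinarith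
        _ = S * digamma S := by rw [heq, mul_sub, hmul]
    have h3 : 0 < 1 / (12 * S) := by positivity
    linarith
end
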